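/- Let M ≥ 4 and L ≥ 2 be integers, and let C be an MC-CAC(M, L, 4). Then |C| ≤ ⌊(M/12)·(ML + L - 2 + 2J)⌋, where J = e₂ + 2e₃ + 2e₄ + 2e₅ and e_k = 1 if k divides L and 0 otherwise (for k = 2, 3, 4, 5). -/

import Mathlib

open Finset

namespace MC14

variable {L : ℕ}

/-- weight of a difference -/
def w0 {L : ℕ} (δ : ZMod L) : ℕ :=
  if 3 * δ = 0 ∨ 4 * δ = 0 then 4 else if 5 * δ = 0 then 3 else 2

lemma two_le_w0 (δ : ZMod L) : 2 ≤ w0 δ := by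
  unfold w0; split_ifs <;> norm_num

lemma w0_eq_four {δ : ZMod L} (h : 3 * δ = 0 ∨ 4 * δ = 0) : w0 δ = 4 := if_pos h

lemma w0_of_two {δ : ZMod L} (h : 2 * δ = 0) : w0 δ = 4 :=
  w0_eq_four (Or.inr (by linear_combination 2 * h))

lemma three_le_w0_of_five {δ : ZMod L} (h : 5 * δ = 0) : 3 ≤ w0 δ := by
  unfold w0; split_ifs <;> norm_num

/-- difference set -/
def dset (A : Finset (ZMod L)) : Finset (ZMod L) :=
  A.offDiag.image fun q => q.2 - q.1

lemma mem_dset {A : Finset (ZMod L)} {x y : ZMod L} (hx : x ∈ A) (hy : y ∈ A)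
    (hxy : x ≠ y) : y - x ∈ dset A := by
  apply Finset.mem_image.2
  exact ⟨(x, y), Finset.mem_offDiag.2 ⟨hx, hy, hxy⟩, rfl⟩

lemma dset_ne_zero {A : Finset (ZMod L)} {δ : ZMod L} (h : δ ∈ dset A) : δ ≠ 0 := by
  rcases Finset.mem_image.1 h with ⟨q, hq, rfl⟩
  rcases Finset.mem_offDiag.1 hq with ⟨-, -, hne⟩
  intro h0
  apply hne
  have : q.2 = q.1 := by linear_combination h0
  exact this.symm

end MC14
namespace MC14
variable {L : ℕ}

lemma sum_w0_2 {D : Finset (ZMod L)} {a b : ZMod L} (ha : a ∈ D) (hb : b ∈ D)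
    (hab : a ≠ b) : w0 a + w0 b ≤ ∑ δ ∈ D, w0 δ := by
  have key : ∑ δ ∈ ({a, b} : Finset (ZMod L)), w0 δ ≤ ∑ δ ∈ D, w0 δ := by
    apply sum_le_sum_of_subset
    intro z hz; simp only [mem_insert, mem_singleton] at hz
    rcases hz with rfl | rfl <;> assumption
  rwa [sum_insert (by simp [hab]), sum_singleton] at key

lemma sum_w0_3 {D : Finset (ZMod L)} {a b c : ZMod L} (ha : a ∈ D) (hb : b ∈ D)
    (hc : c ∈ D) (hab : a ≠ b) (hac : a ≠ c) (hbc : b ≠ c) :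
    w0 a + w0 b + w0 c ≤ ∑ δ ∈ D, w0 δ := by
  have key : ∑ δ ∈ ({a, b, c} : Finset (ZMod L)), w0 δ ≤ ∑ δ ∈ D, w0 δ := by
    apply sum_le_sum_of_subset
    intro z hz; simp only [mem_insert, mem_singleton] at hz
    rcases hz with rfl | rfl | rfl <;> assumption
  rwa [sum_insert (by simp [hab, hac]), sum_insert (by simp [hbc]), sum_singleton,
    ← add_assoc] at key

lemma sum_w0_4 {D : Finset (ZMod L)} {a b c d : ZMod L} (ha : a ∈ D) (hb : b ∈ D)
    (hc : c ∈ D) (hd : d ∈ D) (hab : a ≠ b) (hac : a ≠ c) (had : a ≠ d)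
    (hbc : b ≠ c) (hbd : b ≠ d) (hcd : c ≠ d) :
    w0 a + w0 b + w0 c + w0 d ≤ ∑ δ ∈ D, w0 δ := by
  have key : ∑ δ ∈ ({a, b, c, d} : Finset (ZMod L)), w0 δ ≤ ∑ δ ∈ D, w0 δ := by
    apply sum_le_sum_of_subset
    intro z hz; simp only [mem_insert, mem_singleton] at hz
    rcases hz with rfl | rfl | rfl | rfl <;> assumption
  rwa [sum_insert (by simp [hab, hac, had]), sum_insert (by simp [hbc, hbd]),
    sum_insert (by simp [hcd]), sum_singleton, ← add_assoc, ← add_assoc] at key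

lemma sum_w0_5 {D : Finset (ZMod L)} {a b c d e : ZMod L} (ha : a ∈ D) (hb : b ∈ D)
    (hc : c ∈ D) (hd : d ∈ D) (he : e ∈ D) (hab : a ≠ b) (hac : a ≠ c) (had : a ≠ d)
    (hae : a ≠ e) (hbc : b ≠ c) (hbd : b ≠ d) (hbe : b ≠ e) (hcd : c ≠ d)
    (hce : c ≠ e) (hde : d ≠ e) :
    w0 a + w0 b + w0 c + w0 d + w0 e ≤ ∑ δ ∈ D, w0 δ := by
  have key : ∑ δ ∈ ({a, b, c, d, e} : Finset (ZMod L)), w0 δ ≤ ∑ δ ∈ D, w0 δ := by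
    apply sum_le_sum_of_subset
    intro z hz; simp only [mem_insert, mem_singleton] at hz
    rcases hz with rfl | rfl | rfl | rfl | rfl <;> assumption
  rwa [sum_insert (by simp [hab, hac, had, hae]), sum_insert (by simp [hbc, hbd, hbe]),
    sum_insert (by simp [hcd, hce]), sum_insert (by simp [hde]), sum_singleton,
    ← add_assoc, ← add_assoc, ← add_assoc] at key

lemma sum_w0_6 {D : Finset (ZMod L)} {a b c d e f : ZMod L} (ha : a ∈ D) (hb : b ∈ D)
    (hc : c ∈ D) (hd : d ∈ D) (he : e ∈ D) (hf : f ∈ D)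
    (hab : a ≠ b) (hac : a ≠ c) (had : a ≠ d) (hae : a ≠ e) (haf : a ≠ f)
    (hbc : b ≠ c) (hbd : b ≠ d) (hbe : b ≠ e) (hbf : b ≠ f)
    (hcd : c ≠ d) (hce : c ≠ e) (hcf : c ≠ f) (hde : d ≠ e) (hdf : d ≠ f)
    (hef : e ≠ f) :
    w0 a + w0 b + w0 c + w0 d + w0 e + w0 f ≤ ∑ δ ∈ D, w0 δ := by
  have key : ∑ δ ∈ ({a, b, c, d, e, f} : Finset (ZMod L)), w0 δ ≤ ∑ δ ∈ D, w0 δ := by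
    apply sum_le_sum_of_subset
    intro z hz; simp only [mem_insert, mem_singleton] at hz
    rcases hz with rfl | rfl | rfl | rfl | rfl | rfl <;> assumption
  rwa [sum_insert (by simp [hab, hac, had, hae, haf]),
    sum_insert (by simp [hbc, hbd, hbe, hbf]), sum_insert (by simp [hcd, hce, hcf]),
    sum_insert (by simp [hde, hdf]), sum_insert (by simp [hef]), sum_singleton,
    ← add_assoc, ← add_assoc, ← add_assoc, ← add_assoc] at key

end MC14
namespace MC14
variable {L : ℕ}

lemma w0_nonneg (δ : ZMod L) : 0 ≤ w0 δ := Nat.zero_le _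

lemma low2 {A : Finset (ZMod L)} (hA : A.card = 2) : 4 ≤ ∑ δ ∈ dset A, w0 δ := by
  rcases Finset.card_eq_two.1 hA with ⟨a, b, hab, rfl⟩
  have ha : a ∈ ({a, b} : Finset (ZMod L)) := by simp
  have hb : b ∈ ({a, b} : Finset (ZMod L)) := by simp
  have h1 : b - a ∈ dset {a, b} := mem_dset ha hb hab
  have h2 : a - b ∈ dset {a, b} := mem_dset hb ha hab.symm
  by_cases heq : b - a = a - b
  · have h2t : 2 * (b - a) = 0 := by linear_combination heq
    calc (4 : ℕ) = w0 (b - a) := (w0_of_two h2t).symm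
    _ ≤ _ := Finset.single_le_sum (fun i _ => w0_nonneg i) h1
  · have := sum_w0_2 h1 h2 heq
    have g1 := two_le_w0 (b - a); have g2 := two_le_w0 (a - b)
    omega

lemma aux3 {D : Finset (ZMod L)} {a c : ZMod L} (ha : a ≠ 0) (hc : c ≠ 0)
    (hsum : 2 * a + c = 0) (ma : a ∈ D) (mna : -a ∈ D) (mc : c ∈ D) :
    6 ≤ ∑ δ ∈ D, w0 δ := by
  by_cases hca : c = a
  · have h3 : 3 * a = 0 := by linear_combination hsum - hca
    have hne : a ≠ -a := by
      intro h
      have h2 : 2 * a = 0 := by linear_combination h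
      exact ha (by linear_combination h3 - h2)
    have := sum_w0_2 ma mna hne
    have g1 : w0 a = 4 := w0_eq_four (Or.inl h3)
    have g2 := two_le_w0 (-a : ZMod L)
    omega
  · have hana : a ≠ -a := by
      intro h
      have h2 : 2 * a = 0 := by linear_combination h
      exact hc (by linear_combination hsum - h2)
    have hcna : c ≠ -a := by
      intro h
      exact ha (by linear_combination hsum - h)
    have := sum_w0_3 ma mna mc hana (Ne.symm hca) (Ne.symm hcna)
    have g1 := two_le_w0 a; have g2 := two_le_w0 (-a : ZMod L); have g3 := two_le_w0 c
    omega

lemma low3 {A : Finset (ZMod L)} (hA : A.card = 3) : 6 ≤ ∑ δ ∈ dset A, w0 δ := by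
  rcases Finset.card_eq_three.1 hA with ⟨x, y, z, hxy, hxz, hyz, rfl⟩
  have hx : x ∈ ({x, y, z} : Finset (ZMod L)) := by simp
  have hy : y ∈ ({x, y, z} : Finset (ZMod L)) := by simp
  have hz : z ∈ ({x, y, z} : Finset (ZMod L)) := by simp
  set D := dset ({x, y, z} : Finset (ZMod L)) with hD
  have ma : y - x ∈ D := mem_dset hx hy hxy
  have mna : x - y ∈ D := mem_dset hy hx hxy.symm
  have mb : z - y ∈ D := mem_dset hy hz hyz
  have mnb : y - z ∈ D := mem_dset hz hy hyz.symm
  have mc : x - z ∈ D := mem_dset hz hx (Ne.symm hxz)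
  have mnc : z - x ∈ D := mem_dset hx hz hxz
  have na := dset_ne_zero ma; have nb := dset_ne_zero mb; have nc := dset_ne_zero mc
  by_cases h1 : y - x = z - y
  · have : x - y = -(y - x) := by ring
    rw [this] at mna
    exact aux3 na nc (by linear_combination h1) ma mna mc
  by_cases h2 : z - y = x - z
  · have : y - z = -(z - y) := by ring
    rw [this] at mnb
    exact aux3 nb na (by linear_combination h2) mb mnb ma
  by_cases h3 : y - x = x - z
  · have : x - y = -(y - x) := by ring
    rw [this] at mna
    exact aux3 na nb (by linear_combination h3) ma mna mb
  · have := sum_w0_3 ma mb mc h1 h3 h2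
    have g1 := two_le_w0 (y - x); have g2 := two_le_w0 (z - y); have g3 := two_le_w0 (x - z)
    omega

end MC14
namespace MC14
variable {L : ℕ}

/-- number of ordered pairs in `A` with difference `δ` -/
def mfun (A : Finset (ZMod L)) (δ : ZMod L) : ℕ := (A.filter fun x => x + δ ∈ A).card

lemma fiber_card {A : Finset (ZMod L)} {δ : ZMod L} (hδ : δ ≠ 0) :
    (A.offDiag.filter fun q => q.2 - q.1 = δ).card = mfun A δ := by
  apply Finset.card_bij (fun q _ => q.1)
  · intro q hq
    simp only [mem_filter, Finset.mem_offDiag] at hq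
    obtain ⟨⟨h1, h2, -⟩, h4⟩ := hq
    have : q.2 = q.1 + δ := by linear_combination h4
    exact Finset.mem_filter.2 ⟨h1, by rw [← this]; exact h2⟩
  · intro q hq q' hq' h
    simp only [mem_filter, Finset.mem_offDiag] at hq hq'
    have e : q.2 = q.1 + δ := by linear_combination hq.2
    have e' : q'.2 = q'.1 + δ := by linear_combination hq'.2
    exact Prod.ext h (by rw [e, e', h])
  · intro x hx
    simp only [mfun, mem_filter] at hx
    refine ⟨(x, x + δ), ?_, rfl⟩
    simp only [mem_filter, Finset.mem_offDiag]
    exact ⟨⟨hx.1, hx.2, fun h => hδ (by linear_combination h.symm)⟩, by ring⟩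

lemma sum_mfun {A : Finset (ZMod L)} (hA : A.card = 4) :
    ∑ δ ∈ dset A, mfun A δ = 12 := by
  have h0 : A.offDiag.card
      = ∑ δ ∈ dset A, (A.offDiag.filter fun q => q.2 - q.1 = δ).card :=
    Finset.card_eq_sum_card_fiberwise fun q hq => Finset.mem_image.2 ⟨q, hq, rfl⟩
  rw [Finset.offDiag_card, hA] at h0
  have h1 : ∑ δ ∈ dset A, (A.offDiag.filter fun q => q.2 - q.1 = δ).card
      = ∑ δ ∈ dset A, mfun A δ :=
    Finset.sum_congr rfl fun δ hδ => fiber_card (dset_ne_zero hδ)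
  omega

lemma exists_m3 {A : Finset (ZMod L)} (hA : A.card = 4) (hcard : (dset A).card ≤ 5) :
    ∃ δ ∈ dset A, 3 ≤ mfun A δ := by
  by_contra h
  push_neg at h
  have hle : ∑ δ ∈ dset A, mfun A δ ≤ ∑ _δ ∈ dset A, 2 :=
    Finset.sum_le_sum fun δ hδ => by have := h δ hδ; omega
  rw [sum_mfun hA, Finset.sum_const, smul_eq_mul] at hle
  omega

lemma ord2_unique {a b : ZMod L} (ha2 : 2 * a = 0) (hb2 : 2 * b = 0)
    (ha0 : a ≠ 0) (hb0 : b ≠ 0) : a = b := by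
  match L with
  | 0 =>
    exfalso
    have h : (2 : ℤ) * (show ℤ from a) = 0 := ha2
    have : (show ℤ from a) = 0 := (mul_eq_zero.1 h).resolve_left (by norm_num)
    exact ha0 this
  | (n+1) =>
    have key : ∀ c : ZMod (n+1), 2 * c = 0 → c ≠ 0 → 2 * c.val = n + 1 := by
      intro c hc hc0
      have h1 : ((2 * c.val : ℕ) : ZMod (n+1)) = 0 := by
        push_cast
        rw [ZMod.natCast_rightInverse c]
        exact hc
      have h2 : (n+1) ∣ 2 * c.val := (ZMod.natCast_eq_zero_iff _ _).1 h1
      have h3 : c.val < n + 1 := ZMod.val_lt c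
      have h4 : c.val ≠ 0 := fun h => hc0 ((ZMod.val_eq_zero c).1 h)
      obtain ⟨k, hk⟩ := h2
      match k, hk with
      | 0, hk => omega
      | 1, hk => omega
      | (k+2), hk =>
        have h5 : (n+1)*2 ≤ (n+1)*(k+2) := Nat.mul_le_mul_left _ (by omega)
        omega
    have := key a ha2 ha0
    have := key b hb2 hb0
    have hval : a.val = b.val := by omega
    calc a = ((a.val : ℕ) : ZMod (n+1)) := (ZMod.natCast_rightInverse a).symm
    _ = ((b.val : ℕ) : ZMod (n+1)) := by rw [hval]
    _ = b := ZMod.natCast_rightInverse b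

end MC14
namespace MC14
variable {L : ℕ}

lemma self_ne_add {x δ : ZMod L} (hδ : δ ≠ 0) : x ≠ x + δ := by
  intro h; exact hδ (by linear_combination -h)

lemma case2 {A : Finset (ZMod L)} (hA : A.card = 4) {δ : ZMod L} (hδ : δ ≠ 0)
    (h2 : 2 * δ = 0) (hm : 3 ≤ mfun A δ) : 12 ≤ ∑ d ∈ dset A, w0 d := by
  set B := A.filter (fun x => x + δ ∈ A) with hB
  -- every element of A is δ-shiftable
  have hstep : ∀ x ∈ A, x + δ ∈ A := by
    by_contra hcon
    push_neg at hcon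
    obtain ⟨t, ht, htd⟩ := hcon
    have hBsub : B ⊆ A.erase t := by
      intro x hx
      rw [hB, mem_filter] at hx
      refine Finset.mem_erase.2 ⟨?_, hx.1⟩
      rintro rfl; exact htd hx.2
    have hcard : (A.erase t).card = 3 := by rw [Finset.card_erase_of_mem ht, hA]
    have hBeq : B = A.erase t :=
      Finset.eq_of_subset_of_card_le hBsub (by rw [hcard]; exact hm)
    have hBcard : B.card = 3 := by rw [hBeq, hcard]
    have hcl : ∀ x ∈ B, x + δ ∈ B := by
      intro x hx
      rw [hB, mem_filter] at hx ⊢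
      refine ⟨hx.2, ?_⟩
      have : x + δ + δ = x := by linear_combination h2
      rw [this]; exact hx.1
    obtain ⟨x, hx⟩ := Finset.card_pos.1 (by omega : 0 < B.card)
    have hxd : x + δ ∈ B := hcl x hx
    have hne1 : x ≠ x + δ := self_ne_add hδ
    have hsub2 : ({x, x + δ} : Finset (ZMod L)) ⊆ B := by
      intro z hz; simp only [mem_insert, mem_singleton] at hz
      rcases hz with rfl | rfl <;> assumption
    obtain ⟨y, hy⟩ := Finset.card_pos.1 (by
      have h1 : ({x, x + δ} : Finset (ZMod L)).card = 2 := by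
        rw [Finset.card_insert_of_notMem (by simp [hne1]), Finset.card_singleton]
      have h2' := Finset.card_sdiff_of_subset hsub2
      omega : 0 < (B \ {x, x + δ}).card)
    rw [Finset.mem_sdiff] at hy
    obtain ⟨hyB, hyn⟩ := hy
    simp only [mem_insert, mem_singleton] at hyn
    push_neg at hyn
    have hyd : y + δ ∈ B := hcl y hyB
    have w1 : y + δ ≠ x := by
      intro h; exact hyn.2 (by linear_combination h - h2)
    have w2 : y + δ ≠ x + δ := by
      intro h; exact hyn.1 (by linear_combination h)
    have w3 : y + δ ≠ y := fun h => hδ (by linear_combination h)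
    have hsub4 : ({x, x + δ, y, y + δ} : Finset (ZMod L)) ⊆ B := by
      intro z hz; simp only [mem_insert, mem_singleton] at hz
      rcases hz with rfl | rfl | rfl | rfl <;> assumption
    have hc4 : ({x, x + δ, y, y + δ} : Finset (ZMod L)).card = 4 := by
      rw [Finset.card_insert_of_notMem (by
          simp only [mem_insert, mem_singleton]; push_neg
          exact ⟨hne1, hyn.1.symm, w1.symm⟩),
        Finset.card_insert_of_notMem (by
          simp only [mem_insert, mem_singleton]; push_neg
          exact ⟨hyn.2.symm, w2.symm⟩),
        Finset.card_insert_of_notMem (by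
          simp only [mem_singleton]; exact w3.symm),
        Finset.card_singleton]
    have := Finset.card_le_card hsub4
    omega
  -- pick x and y
  obtain ⟨x, hx⟩ := Finset.card_pos.1 (by omega : 0 < A.card)
  have hxd : x + δ ∈ A := hstep x hx
  have hne1 : x ≠ x + δ := self_ne_add hδ
  have hsub2 : ({x, x + δ} : Finset (ZMod L)) ⊆ A := by
    intro z hz; simp only [mem_insert, mem_singleton] at hz
    rcases hz with rfl | rfl <;> assumption
  obtain ⟨y, hy⟩ := Finset.card_pos.1 (by
    have h1 : ({x, x + δ} : Finset (ZMod L)).card = 2 := by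
      rw [Finset.card_insert_of_notMem (by simp [hne1]), Finset.card_singleton]
    have h2' := Finset.card_sdiff_of_subset hsub2
    omega : 0 < (A \ {x, x + δ}).card)
  rw [Finset.mem_sdiff] at hy
  obtain ⟨hyA, hyn⟩ := hy
  simp only [mem_insert, mem_singleton] at hyn
  push_neg at hyn
  have hyd : y + δ ∈ A := hstep y hyA
  have hu0 : y - x ≠ 0 := fun h => hyn.1 (by linear_combination h)
  have huδ : y - x ≠ δ := fun h => hyn.2 (by linear_combination h)
  -- memberships
  have mδ : δ ∈ dset A := by
    have := mem_dset hx hxd hne1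
    simpa using this
  have mu : y - x ∈ dset A := mem_dset hx hyA hyn.1.symm
  have mnu : x - y ∈ dset A := mem_dset hyA hx hyn.1
  have hydx : y + δ ≠ x := by
    intro h; exact huδ (by linear_combination h - h2)
  have mud : y + δ - x ∈ dset A := mem_dset hx hyd (Ne.symm hydx)
  have mnud : x - (y + δ) ∈ dset A := mem_dset hyd hx hydx
  by_cases h2u : 2 * (y - x) = δ
  · -- u, -u, δ all of additive order dividing 4
    have hw1 : w0 (y - x) = 4 := w0_eq_four (Or.inr (by linear_combination 2 * h2u + h2))
    have hw2 : w0 (x - y) = 4 := w0_eq_four (Or.inr (by linear_combination (-2) * h2u - h2))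
    have hw3 : w0 δ = 4 := w0_of_two h2
    have d1 : y - x ≠ x - y := by
      intro h
      exact hδ (by linear_combination h - h2u)
    have d2 : y - x ≠ δ := huδ
    have d3 : x - y ≠ δ := by
      intro h
      have h3 : 3 * (y - x) = 0 := by linear_combination h2u - h
      have h4 : 4 * (y - x) = 0 := by linear_combination 2 * h2u + h2
      exact hu0 (by linear_combination h4 - h3)
    have := sum_w0_3 mu mnu mδ d1 d2 d3
    omega
  · have h2u0 : 2 * (y - x) ≠ 0 := by
      intro h
      exact huδ (ord2_unique h h2 hu0 hδ)
    have d12 : y - x ≠ x - y := by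
      intro h; exact h2u0 (by linear_combination h)
    have d13 : y - x ≠ δ := huδ
    have d14 : y - x ≠ y + δ - x := by
      intro h; exact hδ (by linear_combination -h)
    have d15 : y - x ≠ x - (y + δ) := by
      intro h; exact h2u (by linear_combination h - h2)
    have d23 : x - y ≠ δ := by
      intro h; exact huδ (by linear_combination -h - h2)
    have d24 : x - y ≠ y + δ - x := by
      intro h; exact h2u (by linear_combination -h - h2)
    have d25 : x - y ≠ x - (y + δ) := by
      intro h; exact hδ (by linear_combination h)
    have d34 : δ ≠ y + δ - x := by
      intro h; exact hu0 (by linear_combination -h)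
    have d35 : δ ≠ x - (y + δ) := by
      intro h; exact hu0 (by linear_combination h - h2)
    have d45 : y + δ - x ≠ x - (y + δ) := by
      intro h; exact h2u0 (by linear_combination h - h2)
    have hw3 : w0 δ = 4 := w0_of_two h2
    have := sum_w0_5 mu mnu mδ mud mnud d12 d13 d14 d15 d23 d24 d25 d34 d35 d45
    have g1 := two_le_w0 (y - x); have g2 := two_le_w0 (x - y)
    have g4 := two_le_w0 (y + δ - x); have g5 := two_le_w0 (x - (y + δ))
    omega

end MC14
namespace MC14
variable {L : ℕ}

lemma case3 {A : Finset (ZMod L)} (hA : A.card = 4) {δ : ZMod L} (hδ : δ ≠ 0)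
    (h2n : 2 * δ ≠ 0) (hm : 3 ≤ mfun A δ) : 12 ≤ ∑ d ∈ dset A, w0 d := by
  classical
  set B := A.filter (fun x => x + δ ∈ A) with hB
  have hBsub : B ⊆ A := Finset.filter_subset _ _
  -- find x with x, x+δ, x+2δ ∈ A
  obtain ⟨x, hx1, hx2, hx3⟩ : ∃ x, x ∈ A ∧ x + δ ∈ A ∧ x + 2 * δ ∈ A := by
    have him : B.image (fun x => x + δ) ⊆ A := by
      intro z hz
      rcases Finset.mem_image.1 hz with ⟨w, hw, rfl⟩
      exact (Finset.mem_filter.1 hw).2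
    have hcardim : (B.image (fun x => x + δ)).card = B.card :=
      Finset.card_image_of_injective _ (add_left_injective δ)
    have hunion : (B ∪ B.image (fun x => x + δ)).card ≤ 4 := by
      rw [← hA]
      exact Finset.card_le_card (Finset.union_subset hBsub him)
    have hint := Finset.card_inter_add_card_union B (B.image (fun x => x + δ))
    have hBc : 3 ≤ B.card := hm
    have hpos : 0 < (B ∩ B.image (fun x => x + δ)).card := by omega
    obtain ⟨y, hy⟩ := Finset.card_pos.1 hpos
    rw [Finset.mem_inter] at hy
    rcases Finset.mem_image.1 hy.2 with ⟨w, hw, hwy⟩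
    have hw1 : w ∈ A := hBsub hw
    have hw2 : w + δ ∈ A := (Finset.mem_filter.1 hw).2
    have hy2 : y + δ ∈ A := (Finset.mem_filter.1 hy.1).2
    refine ⟨w, hw1, hw2, ?_⟩
    have e : w + 2 * δ = y + δ := by rw [← hwy]; ring
    rwa [e]
  have ne01 : x ≠ x + δ := self_ne_add hδ
  have ne02 : x ≠ x + 2 * δ := self_ne_add h2n
  have ne12 : x + δ ≠ x + 2 * δ := fun h => hδ (by linear_combination -h)
  -- the fourth element t
  have hTsub : ({x, x + δ, x + 2 * δ} : Finset (ZMod L)) ⊆ A := by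
    intro z hz; simp only [mem_insert, mem_singleton] at hz
    rcases hz with rfl | rfl | rfl <;> assumption
  have hTcard : ({x, x + δ, x + 2 * δ} : Finset (ZMod L)).card = 3 := by
    rw [Finset.card_insert_of_notMem (by
        simp only [mem_insert, mem_singleton]; push_neg; exact ⟨ne01, ne02⟩),
      Finset.card_insert_of_notMem (by simp only [mem_singleton]; exact ne12),
      Finset.card_singleton]
  obtain ⟨t, ht⟩ := Finset.card_pos.1 (by
    have := Finset.card_sdiff_of_subset hTsub
    omega : 0 < (A \ {x, x + δ, x + 2 * δ}).card)
  rw [Finset.mem_sdiff] at ht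
  obtain ⟨htA, htn⟩ := ht
  simp only [mem_insert, mem_singleton] at htn
  push_neg at htn
  obtain ⟨ht1, ht2, ht3⟩ := htn
  -- dset memberships for δ, 2δ
  have mδ : δ ∈ dset A := by
    have h := mem_dset hx1 hx2 ne01
    have e : x + δ - x = δ := by ring
    rwa [e] at h
  have m2δ : 2 * δ ∈ dset A := by
    have h := mem_dset hx1 hx3 ne02
    have e : x + 2 * δ - x = 2 * δ := by ring
    rwa [e] at h
  by_cases h3 : 3 * δ = 0
  · -- A contains a coset of the 3-torsion subgroup plus an extra point
    have mv : t - x ∈ dset A := mem_dset hx1 htA (Ne.symm ht1)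
    have mv1 : t - (x + δ) ∈ dset A := mem_dset hx2 htA (Ne.symm ht2)
    have mv2 : t - (x + 2 * δ) ∈ dset A := mem_dset hx3 htA (Ne.symm ht3)
    have d1 : δ ≠ 2 * δ := fun h => hδ (by linear_combination -h)
    have d2 : δ ≠ t - x := fun h => ht2 (by linear_combination -h)
    have d3 : δ ≠ t - (x + δ) := fun h => ht3 (by linear_combination -h)
    have d4 : δ ≠ t - (x + 2 * δ) := fun h => ht1 (by linear_combination -h + h3)
    have d5 : 2 * δ ≠ t - x := fun h => ht3 (by linear_combination -h)
    have d6 : 2 * δ ≠ t - (x + δ) := fun h => ht1 (by linear_combination -h + h3)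
    have d7 : 2 * δ ≠ t - (x + 2 * δ) := fun h => ht2 (by linear_combination -h + h3)
    have d8 : t - x ≠ t - (x + δ) := fun h => hδ (by linear_combination h)
    have d9 : t - x ≠ t - (x + 2 * δ) := fun h => h2n (by linear_combination h)
    have d10 : t - (x + δ) ≠ t - (x + 2 * δ) := fun h => hδ (by linear_combination h)
    have wδ : w0 δ = 4 := w0_eq_four (Or.inl h3)
    have w2δ : w0 (2 * δ) = 4 := w0_eq_four (Or.inl (by linear_combination 2 * h3))
    have := sum_w0_5 mδ m2δ mv mv1 mv2 d1 d2 d3 d4 d5 d6 d7 d8 d9 d10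
    have g1 := two_le_w0 (t - x); have g2 := two_le_w0 (t - (x + δ))
    have g3 := two_le_w0 (t - (x + 2 * δ))
    omega
  · -- chain case: A = {z, z+δ, z+2δ, z+3δ}
    have hS4sub : (insert x (insert (x + δ) (insert (x + 2 * δ) ({t} : Finset (ZMod L))))) ⊆ A := by
      intro z hz; simp only [mem_insert, mem_singleton] at hz
      rcases hz with rfl | rfl | rfl | rfl <;> assumption
    have hS4card : (insert x (insert (x + δ) (insert (x + 2 * δ) ({t} : Finset (ZMod L))))).card = 4 := by
      rw [Finset.card_insert_of_notMem (by
          simp only [mem_insert, mem_singleton]; push_neg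
          exact ⟨ne01, ne02, ht1.symm⟩),
        Finset.card_insert_of_notMem (by
          simp only [mem_insert, mem_singleton]; push_neg
          exact ⟨ne12, ht2.symm⟩),
        Finset.card_insert_of_notMem (by simp only [mem_singleton]; exact ht3.symm),
        Finset.card_singleton]
    have hAeq := Finset.eq_of_subset_of_card_le hS4sub (by omega)
    obtain ⟨z, hz0, hz1, hz2, hz3⟩ :
        ∃ z, z ∈ A ∧ z + δ ∈ A ∧ z + 2 * δ ∈ A ∧ z + 3 * δ ∈ A := by
      obtain ⟨w, hw⟩ := Finset.card_pos.1 (by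
        have hsub2 : ({x, x + δ} : Finset (ZMod L)) ⊆ B := by
          intro u hu; simp only [mem_insert, mem_singleton] at hu
          rcases hu with rfl | rfl
          · exact Finset.mem_filter.2 ⟨hx1, hx2⟩
          · exact Finset.mem_filter.2 ⟨hx2, by
              have e : x + δ + δ = x + 2 * δ := by ring
              rwa [e]⟩
        have hc2 : ({x, x + δ} : Finset (ZMod L)).card = 2 := by
          rw [Finset.card_insert_of_notMem (by simp only [mem_singleton]; exact ne01),
            Finset.card_singleton]
        have := Finset.card_sdiff_of_subset hsub2
        have hBc : 3 ≤ B.card := hm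
        omega : 0 < (B \ {x, x + δ}).card)
      rw [Finset.mem_sdiff] at hw
      obtain ⟨hwB, hwn⟩ := hw
      simp only [mem_insert, mem_singleton] at hwn
      push_neg at hwn
      have hwA : w ∈ A := hBsub hwB
      have hwd : w + δ ∈ A := (Finset.mem_filter.1 hwB).2
      rw [← hAeq] at hwA
      simp only [mem_insert, mem_singleton] at hwA
      rcases hwA with hweq | hweq | hweq | hweq
      · exact absurd hweq hwn.1
      · exact absurd hweq hwn.2
      · -- w = x + 2δ, so x + 3δ ∈ A
        refine ⟨x, hx1, hx2, hx3, ?_⟩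
        rw [hweq] at hwd
        have e : x + 2 * δ + δ = x + 3 * δ := by ring
        rwa [e] at hwd
      · -- w = t, so t + δ ∈ A; t + δ must be x
        rw [hweq] at hwd
        have htd : t + δ ∈ A := hwd
        rw [← hAeq] at htd
        simp only [mem_insert, mem_singleton] at htd
        rcases htd with h | h | h | h
        · -- t = x - δ
          refine ⟨t, htA, ?_, ?_, ?_⟩
          · rw [h]; exact hx1
          · have e : t + 2 * δ = x + δ := by linear_combination h
            rw [e]; exact hx2
          · have e : t + 3 * δ = x + 2 * δ := by linear_combination h
            rw [e]; exact hx3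
        · exact absurd (by linear_combination h) ht1
        · exact absurd (by linear_combination h) ht2
        · exact absurd (by linear_combination h) hδ
    have nz1 : z ≠ z + δ := self_ne_add hδ
    have nz2 : z ≠ z + 2 * δ := self_ne_add h2n
    have nz3 : z ≠ z + 3 * δ := self_ne_add h3
    have m1 : δ ∈ dset A := mδ
    have m2 : 2 * δ ∈ dset A := m2δ
    have m3 : 3 * δ ∈ dset A := by
      have h := mem_dset hz0 hz3 nz3
      have e : z + 3 * δ - z = 3 * δ := by ring
      rwa [e] at h
    by_cases h4 : 4 * δ = 0
    · have w1 : w0 δ = 4 := w0_eq_four (Or.inr h4)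
      have w2 : w0 (2 * δ) = 4 := w0_eq_four (Or.inr (by linear_combination 2 * h4))
      have w3 : w0 (3 * δ) = 4 := w0_eq_four (Or.inr (by linear_combination 3 * h4))
      have d1 : δ ≠ 2 * δ := fun h => hδ (by linear_combination -h)
      have d2 : δ ≠ 3 * δ := fun h => h2n (by linear_combination -h)
      have d3 : 2 * δ ≠ 3 * δ := fun h => hδ (by linear_combination -h)
      have := sum_w0_3 m1 m2 m3 d1 d2 d3
      omega
    by_cases h5 : 5 * δ = 0
    · have m4 : 4 * δ ∈ dset A := by
        have h := mem_dset hz1 hz0 (Ne.symm nz1)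
        have e : z - (z + δ) = 4 * δ := by linear_combination -h5
        rwa [e] at h
      have d1 : δ ≠ 2 * δ := fun h => hδ (by linear_combination -h)
      have d2 : δ ≠ 3 * δ := fun h => h2n (by linear_combination -h)
      have d3 : δ ≠ 4 * δ := fun h => h3 (by linear_combination -h)
      have d4 : 2 * δ ≠ 3 * δ := fun h => hδ (by linear_combination -h)
      have d5 : 2 * δ ≠ 4 * δ := fun h => h2n (by linear_combination -h)
      have d6 : 3 * δ ≠ 4 * δ := fun h => hδ (by linear_combination -h)
      have w1 := three_le_w0_of_five h5
      have w2 := three_le_w0_of_five (show 5 * (2 * δ) = 0 by linear_combination 2 * h5)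
      have w3 := three_le_w0_of_five (show 5 * (3 * δ) = 0 by linear_combination 3 * h5)
      have w4 := three_le_w0_of_five (show 5 * (4 * δ) = 0 by linear_combination 4 * h5)
      have := sum_w0_4 m1 m2 m3 m4 d1 d2 d3 d4 d5 d6
      omega
    by_cases h6 : 6 * δ = 0
    · have m4 : 4 * δ ∈ dset A := by
        have h := mem_dset hz2 hz0 (Ne.symm nz2)
        have e : z - (z + 2 * δ) = 4 * δ := by linear_combination -h6
        rwa [e] at h
      have w2 : w0 (2 * δ) = 4 := w0_eq_four (Or.inl (by linear_combination h6))
      have w3 : w0 (3 * δ) = 4 := w0_eq_four (Or.inr (by linear_combination 2 * h6))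
      have w4 : w0 (4 * δ) = 4 := w0_eq_four (Or.inl (by linear_combination 2 * h6))
      have d1 : 2 * δ ≠ 3 * δ := fun h => hδ (by linear_combination -h)
      have d2 : 2 * δ ≠ 4 * δ := fun h => h2n (by linear_combination -h)
      have d3 : 3 * δ ≠ 4 * δ := fun h => hδ (by linear_combination -h)
      have := sum_w0_3 m2 m3 m4 d1 d2 d3
      omega
    · -- generic chain: six distinct differences
      have mn1 : -δ ∈ dset A := by
        have h := mem_dset hz1 hz0 (Ne.symm nz1)
        have e : z - (z + δ) = -δ := by ring
        rwa [e] at h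
      have mn2 : -(2 * δ) ∈ dset A := by
        have h := mem_dset hz2 hz0 (Ne.symm nz2)
        have e : z - (z + 2 * δ) = -(2 * δ) := by ring
        rwa [e] at h
      have mn3 : -(3 * δ) ∈ dset A := by
        have h := mem_dset hz3 hz0 (Ne.symm nz3)
        have e : z - (z + 3 * δ) = -(3 * δ) := by ring
        rwa [e] at h
      have ab : δ ≠ 2 * δ := fun h => hδ (by linear_combination -h)
      have ac : δ ≠ 3 * δ := fun h => h2n (by linear_combination -h)
      have ad : δ ≠ -δ := fun h => h2n (by linear_combination h)
      have ae : δ ≠ -(2 * δ) := fun h => h3 (by linear_combination h)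
      have af : δ ≠ -(3 * δ) := fun h => h4 (by linear_combination h)
      have bc : 2 * δ ≠ 3 * δ := fun h => hδ (by linear_combination -h)
      have bd : 2 * δ ≠ -δ := fun h => h3 (by linear_combination h)
      have be : 2 * δ ≠ -(2 * δ) := fun h => h4 (by linear_combination h)
      have bf : 2 * δ ≠ -(3 * δ) := fun h => h5 (by linear_combination h)
      have cd : 3 * δ ≠ -δ := fun h => h4 (by linear_combination h)
      have ce : 3 * δ ≠ -(2 * δ) := fun h => h5 (by linear_combination h)
      have cf : 3 * δ ≠ -(3 * δ) := fun h => h6 (by linear_combination h)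
      have de : -δ ≠ -(2 * δ) := fun h => hδ (by linear_combination h)
      have df : -δ ≠ -(3 * δ) := fun h => h2n (by linear_combination h)
      have ef : -(2 * δ) ≠ -(3 * δ) := fun h => hδ (by linear_combination h)
      have := sum_w0_6 m1 m2 m3 mn1 mn2 mn3 ab ac ad ae af bc bd be bf cd ce cf de df ef
      have g1 := two_le_w0 δ; have g2 := two_le_w0 (2 * δ); have g3 := two_le_w0 (3 * δ)
      have g4 := two_le_w0 (-δ : ZMod L); have g5 := two_le_w0 (-(2 * δ) : ZMod L)
      have g6 := two_le_w0 (-(3 * δ) : ZMod L)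
      omega

lemma low4 {A : Finset (ZMod L)} (hA : A.card = 4) : 12 ≤ ∑ δ ∈ dset A, w0 δ := by
  by_cases hcard : 6 ≤ (dset A).card
  · have h : (dset A).card • 2 ≤ ∑ δ ∈ dset A, w0 δ :=
      Finset.card_nsmul_le_sum _ _ _ fun δ _ => two_le_w0 δ
    rw [smul_eq_mul] at h
    omega
  · obtain ⟨δ, hδmem, hm⟩ := exists_m3 hA (by omega)
    have hδ := dset_ne_zero hδmem
    by_cases h2 : 2 * δ = 0
    · exact case2 hA hδ h2 hm
    · exact case3 hA hδ h2 hm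

end MC14
namespace MC14

def gg (n : ℕ) : ℕ := if n = 2 then 4 else if n = 3 then 6 else if n = 4 then 12 else 0


end MC14
namespace MC14

lemma numeric {ι : Type*} [DecidableEq ι] (I : Finset ι) (n : ι → ℕ)
    (h1 : ∀ i ∈ I, 1 ≤ n i) (h4 : ∑ i ∈ I, n i = 4) :
    12 ≤ ∑ q ∈ I ×ˢ I, (if q.1 = q.2 then gg (n q.1) else max (n q.1) (n q.2)) := by
  classical
  set f : ι × ι → ℕ := fun q => if q.1 = q.2 then gg (n q.1) else max (n q.1) (n q.2) with hf
  have hdiagg : ∀ g : ι → ℕ,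
      ∑ q ∈ (I ×ˢ I).filter (fun q => q.1 = q.2), g q.1 = ∑ i ∈ I, g i := by
    intro g
    apply Finset.sum_nbij' (i := fun q : ι × ι => q.1) (j := fun i => (i, i))
    · intro q hq
      exact (Finset.mem_product.1 (Finset.mem_filter.1 hq).1).1
    · intro i hi
      exact Finset.mem_filter.2 ⟨Finset.mem_product.2 ⟨hi, hi⟩, rfl⟩
    · intro q hq
      exact Prod.ext rfl (Finset.mem_filter.1 hq).2
    · intro i _; rfl
    · intro q _; rfl
  have hdiag : ∑ q ∈ (I ×ˢ I).filter (fun q => q.1 = q.2), f q = ∑ i ∈ I, gg (n i) := by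
    rw [← hdiagg (fun i => gg (n i))]
    refine Finset.sum_congr rfl fun q hq => ?_
    rw [hf]; simp only [if_pos (Finset.mem_filter.1 hq).2]
  have hoffge : ∑ q ∈ (I ×ˢ I).filter (fun q => ¬q.1 = q.2), n q.1
      ≤ ∑ q ∈ (I ×ˢ I).filter (fun q => ¬q.1 = q.2), f q := by
    refine Finset.sum_le_sum fun q hq => ?_
    rw [hf]; simp only [if_neg (Finset.mem_filter.1 hq).2]
    exact le_max_left _ _
  have hprodsum : ∑ q ∈ I ×ˢ I, n q.1 = 4 * I.card := by
    rw [Finset.sum_product]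
    calc ∑ i ∈ I, ∑ _j ∈ I, n i = ∑ i ∈ I, n i * I.card := by
          refine Finset.sum_congr rfl fun i _ => ?_
          rw [Finset.sum_const, smul_eq_mul, mul_comm]
    _ = (∑ i ∈ I, n i) * I.card := by rw [Finset.sum_mul]
    _ = 4 * I.card := by rw [h4]
  have hdiagn : ∑ q ∈ (I ×ˢ I).filter (fun q => q.1 = q.2), n q.1 = 4 := by
    rw [hdiagg n, h4]
  have hsplitn := Finset.sum_filter_add_sum_filter_not (I ×ˢ I) (fun q => q.1 = q.2)
    (fun q => n q.1)
  have hoffn : ∑ q ∈ (I ×ˢ I).filter (fun q => ¬q.1 = q.2), n q.1 = 4 * I.card - 4 := by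
    omega
  have hIcard : I.card ≤ 4 := by
    have : ∑ _i ∈ I, 1 ≤ ∑ i ∈ I, n i := Finset.sum_le_sum h1
    rw [Finset.sum_const, smul_eq_mul, mul_one] at this
    omega
  have hIpos : 1 ≤ I.card := by
    rcases Finset.eq_empty_or_nonempty I with rfl | h
    · simp at h4
    · exact Finset.card_pos.2 h
  have hfinal : 12 ≤ ∑ q ∈ (I ×ˢ I).filter (fun q => q.1 = q.2), f q
      + ∑ q ∈ (I ×ˢ I).filter (fun q => ¬q.1 = q.2), f q := by
    interval_cases hc : I.card
    · -- card 1
      obtain ⟨a, ha⟩ := Finset.card_eq_one.1 hc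
      subst ha
      simp only [Finset.sum_singleton] at h4
      have hgg : ∑ i ∈ ({a} : Finset ι), gg (n i) = 12 := by
        rw [Finset.sum_singleton, h4]; rfl
      rw [hdiag, hgg]
      omega
    · -- card 2
      obtain ⟨a, b, hab, hI⟩ := Finset.card_eq_two.1 hc
      subst hI
      have hsum2 : n a + n b = 4 := by
        rw [Finset.sum_insert (by simp [hab]), Finset.sum_singleton] at h4
        exact h4
      have hna : 1 ≤ n a := h1 a (by simp)
      have hnb : 1 ≤ n b := h1 b (by simp)
      have hmem1 : ((a, b) : ι × ι) ∈ (({a, b} : Finset ι) ×ˢ {a, b}).filter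
          (fun q => ¬q.1 = q.2) :=
        Finset.mem_filter.2 ⟨Finset.mem_product.2 ⟨by simp, by simp⟩, hab⟩
      have hmem2 : ((b, a) : ι × ι) ∈ (({a, b} : Finset ι) ×ˢ {a, b}).filter
          (fun q => ¬q.1 = q.2) :=
        Finset.mem_filter.2 ⟨Finset.mem_product.2 ⟨by simp, by simp⟩, hab.symm⟩
      have hpairne : ((a, b) : ι × ι) ≠ (b, a) := by
        intro h; exact hab (congrArg Prod.fst h)
      have hsub : ({((a, b) : ι × ι), (b, a)} : Finset (ι × ι)) ⊆
          (({a, b} : Finset ι) ×ˢ {a, b}).filter (fun q => ¬q.1 = q.2) := by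
        intro z hz; simp only [Finset.mem_insert, Finset.mem_singleton] at hz
        rcases hz with rfl | rfl <;> assumption
      have hoff2 : f (a, b) + f (b, a) ≤
          ∑ q ∈ (({a, b} : Finset ι) ×ˢ {a, b}).filter (fun q => ¬q.1 = q.2), f q := by
        have := Finset.sum_le_sum_of_subset (f := f) hsub
        rwa [Finset.sum_insert (by simp [hpairne]), Finset.sum_singleton] at this
      have hfab : f (a, b) = max (n a) (n b) := by rw [hf]; exact if_neg hab
      have hfba : f (b, a) = max (n b) (n a) := by rw [hf]; exact if_neg hab.symm
      have hdiag2 : ∑ i ∈ ({a, b} : Finset ι), gg (n i) = gg (n a) + gg (n b) := by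
        rw [Finset.sum_insert (by simp [hab]), Finset.sum_singleton]
      rw [hdiag, hdiag2]
      rw [hfab, hfba] at hoff2
      have hnum : 12 ≤ gg (n a) + gg (n b) + (max (n a) (n b) + max (n b) (n a)) := by
        have hcase : n a = 1 ∨ n a = 2 ∨ n a = 3 := by omega
        rcases hcase with h | h | h
        · have hb' : n b = 3 := by omega
          rw [h, hb']; decide
        · have hb' : n b = 2 := by omega
          rw [h, hb']; decide
        · have hb' : n b = 1 := by omega
          rw [h, hb']; decide
      omega
    · -- card 3
      have hex : ∃ i ∈ I, n i = 2 := by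
        by_contra hcon
        push_neg at hcon
        by_cases hbig : ∃ i ∈ I, 3 ≤ n i
        · obtain ⟨i, hi, h3⟩ := hbig
          have herase := Finset.add_sum_erase I n hi
          have hcarde : (I.erase i).card = 2 := by rw [Finset.card_erase_of_mem hi, hc]
          have hge : 2 ≤ ∑ j ∈ I.erase i, n j := by
            have h' : ∑ _j ∈ I.erase i, 1 ≤ ∑ j ∈ I.erase i, n j :=
              Finset.sum_le_sum fun j hj => h1 j (Finset.mem_of_mem_erase hj)
            rwa [Finset.sum_const, smul_eq_mul, mul_one, hcarde] at h'
          omega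
        · push_neg at hbig
          have hall : ∀ i ∈ I, n i ≤ 1 := by
            intro i hi
            have hb := hbig i hi
            have hc' := hcon i hi
            omega
          have hsumle : ∑ i ∈ I, n i ≤ ∑ _i ∈ I, 1 := Finset.sum_le_sum hall
          rw [Finset.sum_const, smul_eq_mul, mul_one, hc] at hsumle
          omega
      obtain ⟨i, hi, hni⟩ := hex
      have hggi : 4 ≤ ∑ j ∈ I, gg (n j) := by
        have hgi : gg (n i) = 4 := by rw [hni]; rfl
        calc (4 : ℕ) = gg (n i) := hgi.symm
        _ ≤ ∑ j ∈ I, gg (n j) :=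
          Finset.single_le_sum (f := fun j => gg (n j)) (fun j _ => Nat.zero_le _) hi
      rw [hdiag]
      omega
    · -- card 4
      omega
  calc (12 : ℕ) ≤ _ := hfinal
  _ = ∑ q ∈ I ×ˢ I, f q := Finset.sum_filter_add_sum_filter_not (I ×ˢ I) _ f

end MC14
namespace MC14
variable {M L : ℕ}

def Wt {M L : ℕ} (p : Fin M × Fin M × ZMod L) : ℕ := if p.1 = p.2.1 then w0 p.2.2 else 1

def Pat {M L : ℕ} (S : Finset (Fin M × ZMod L)) : Finset (Fin M × Fin M × ZMod L) :=
  S.offDiag.image fun q => (q.1.1, q.2.1, q.2.2 - q.1.2)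

lemma keyB {S : Finset (Fin M × ZMod L)} (hS : S.card = 4) :
    12 ≤ ∑ p ∈ Pat S, Wt p := by
  classical
  set I := S.image Prod.fst with hI
  set n : Fin M → ℕ := fun i => (S.filter fun x => x.1 = i).card with hn
  have hmaps : ∀ p ∈ Pat S, (p.1, p.2.1) ∈ I ×ˢ I := by
    intro p hp
    rcases Finset.mem_image.1 hp with ⟨q, hq, rfl⟩
    obtain ⟨h1, h2, -⟩ := Finset.mem_offDiag.1 hq
    exact Finset.mem_product.2 ⟨Finset.mem_image_of_mem _ h1, Finset.mem_image_of_mem _ h2⟩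
  have hsplit := Finset.sum_fiberwise_of_maps_to hmaps Wt
  have h1 : ∀ i ∈ I, 1 ≤ n i := by
    intro i hi
    rcases Finset.mem_image.1 hi with ⟨x, hx, rfl⟩
    have : x ∈ S.filter fun y => y.1 = x.1 := Finset.mem_filter.2 ⟨hx, rfl⟩
    have hpos := Finset.card_pos.2 ⟨x, this⟩
    simp only [hn]
    exact hpos
  have h4 : ∑ i ∈ I, n i = 4 := by
    rw [hn, ← Finset.card_eq_sum_card_fiberwise (fun x hx => Finset.mem_image_of_mem Prod.fst hx), hS]
  have hfiber : ∀ q ∈ I ×ˢ I,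
      (if q.1 = q.2 then gg (n q.1) else max (n q.1) (n q.2))
        ≤ ∑ p ∈ (Pat S).filter (fun p => (p.1, p.2.1) = q), Wt p := by
    rintro ⟨i, j⟩ hq
    obtain ⟨hiI, hjI⟩ := Finset.mem_product.1 hq
    by_cases hij : i = j
    · subst hij
      simp only [if_pos rfl]
      -- diagonal fiber
      set Ai := (S.filter fun x => x.1 = i).image Prod.snd with hAi
      have hAicard : Ai.card = n i := by
        rw [hAi, hn]
        apply Finset.card_image_of_injOn
        intro x hx y hy hxy
        have hx1 : x.1 = i := (Finset.mem_filter.1 hx).2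
        have hy1 : y.1 = i := (Finset.mem_filter.1 hy).2
        exact Prod.ext (hx1.trans hy1.symm) hxy
      have hsub : (dset Ai).image (fun δ => ((i, i, δ) : Fin M × Fin M × ZMod L)) ⊆
          (Pat S).filter (fun p => (p.1, p.2.1) = (i, i)) := by
        intro p hp
        rcases Finset.mem_image.1 hp with ⟨δ, hδ, rfl⟩
        rcases Finset.mem_image.1 hδ with ⟨ab, hab, rfl⟩
        obtain ⟨ha, hb, hne⟩ := Finset.mem_offDiag.1 hab
        rcases Finset.mem_image.1 ha with ⟨x, hx, hxa⟩
        rcases Finset.mem_image.1 hb with ⟨y, hy, hyb⟩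
        have hx1 : x.1 = i := (Finset.mem_filter.1 hx).2
        have hy1 : y.1 = i := (Finset.mem_filter.1 hy).2
        have hxyne : x ≠ y := by
          intro h; rw [h] at hxa; exact hne (hxa.symm.trans hyb)
        refine Finset.mem_filter.2 ⟨?_, ?_⟩
        · apply Finset.mem_image.2
          refine ⟨(x, y), Finset.mem_offDiag.2
            ⟨(Finset.mem_filter.1 hx).1, (Finset.mem_filter.1 hy).1, hxyne⟩, ?_⟩
          rw [hx1, hy1, hxa, hyb]
        · rfl
      have hsum_im : ∑ p ∈ (dset Ai).image (fun δ => ((i, i, δ) : Fin M × Fin M × ZMod L)), Wt p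
          = ∑ δ ∈ dset Ai, w0 δ := by
        rw [Finset.sum_image (by intro a _ b _ h; exact (Prod.ext_iff.1 (Prod.ext_iff.1 h).2).2)]
        refine Finset.sum_congr rfl fun δ _ => ?_
        unfold Wt
        simp
      have hni4 : n i ≤ 4 := by
        rw [hn, ← hS]; exact Finset.card_filter_le _ _
      have hgg : gg (n i) ≤ ∑ δ ∈ dset Ai, w0 δ := by
        have h1i := h1 i hiI
        have hcase : n i = 1 ∨ n i = 2 ∨ n i = 3 ∨ n i = 4 := by omega
        rcases hcase with h | h | h | h
        · rw [h]; exact Nat.zero_le _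
        · rw [h]; exact low2 (by rw [hAicard, h])
        · rw [h]; exact low3 (by rw [hAicard, h])
        · rw [h]; exact low4 (by rw [hAicard, h])
      calc gg (n i) ≤ ∑ δ ∈ dset Ai, w0 δ := hgg
      _ = _ := hsum_im.symm
      _ ≤ _ := Finset.sum_le_sum_of_subset hsub
    · simp only [if_neg hij]
      -- cross fiber
      have hwt1 : ∀ p ∈ (Pat S).filter (fun p => (p.1, p.2.1) = ((i, j) : Fin M × Fin M)), Wt p = 1 := by
        intro p hp
        have := (Finset.mem_filter.1 hp).2
        have hp1 : p.1 = i := (Prod.ext_iff.1 this).1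
        have hp2 : p.2.1 = j := (Prod.ext_iff.1 this).2
        unfold Wt
        rw [if_neg (by rw [hp1, hp2]; exact hij)]
      have hsumcard : ∑ p ∈ (Pat S).filter (fun p => (p.1, p.2.1) = ((i, j) : Fin M × Fin M)), Wt p
          = ((Pat S).filter (fun p => (p.1, p.2.1) = ((i, j) : Fin M × Fin M))).card := by
        rw [Finset.sum_congr rfl hwt1, Finset.sum_const, smul_eq_mul, mul_one]
      rw [hsumcard]
      rcases Finset.mem_image.1 hiI with ⟨x0, hx0, hx01⟩
      rcases Finset.mem_image.1 hjI with ⟨y0, hy0, hy01⟩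
      have hcardj : n j ≤ ((Pat S).filter (fun p => (p.1, p.2.1) = ((i, j) : Fin M × Fin M))).card := by
        have himsub : ((S.filter fun y => y.1 = j).image
            (fun y => ((i, j, y.2 - x0.2) : Fin M × Fin M × ZMod L))) ⊆
            (Pat S).filter (fun p => (p.1, p.2.1) = ((i, j) : Fin M × Fin M)) := by
          intro p hp
          rcases Finset.mem_image.1 hp with ⟨y, hy, rfl⟩
          have hyS : y ∈ S := (Finset.mem_filter.1 hy).1
          have hy1 : y.1 = j := (Finset.mem_filter.1 hy).2
          have hne : x0 ≠ y := by
            intro h; rw [← h, hx01] at hy1; exact hij hy1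
          refine Finset.mem_filter.2 ⟨?_, rfl⟩
          apply Finset.mem_image.2
          exact ⟨(x0, y), Finset.mem_offDiag.2 ⟨hx0, hyS, hne⟩, by rw [hx01, hy1]⟩
        have hinj : ((S.filter fun y => y.1 = j).image
            (fun y => ((i, j, y.2 - x0.2) : Fin M × Fin M × ZMod L))).card
            = n j := by
          rw [hn]
          apply Finset.card_image_of_injOn
          intro y hy z hz h
          have h2 : y.2 - x0.2 = z.2 - x0.2 := (Prod.ext_iff.1 (Prod.ext_iff.1 h).2).2
          have hy2 : y.2 = z.2 := by linear_combination h2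
          exact Prod.ext (((Finset.mem_filter.1 hy).2).trans ((Finset.mem_filter.1 hz).2).symm) hy2
        calc n j = _ := hinj.symm
        _ ≤ _ := Finset.card_le_card himsub
      have hcardi : n i ≤ ((Pat S).filter (fun p => (p.1, p.2.1) = ((i, j) : Fin M × Fin M))).card := by
        have himsub : ((S.filter fun x => x.1 = i).image
            (fun x => ((i, j, y0.2 - x.2) : Fin M × Fin M × ZMod L))) ⊆
            (Pat S).filter (fun p => (p.1, p.2.1) = ((i, j) : Fin M × Fin M)) := by
          intro p hp
          rcases Finset.mem_image.1 hp with ⟨x, hx, rfl⟩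
          have hxS : x ∈ S := (Finset.mem_filter.1 hx).1
          have hx1 : x.1 = i := (Finset.mem_filter.1 hx).2
          have hne : x ≠ y0 := by
            intro h; rw [h, hy01] at hx1; exact hij hx1.symm
          refine Finset.mem_filter.2 ⟨?_, rfl⟩
          apply Finset.mem_image.2
          exact ⟨(x, y0), Finset.mem_offDiag.2 ⟨hxS, hy0, hne⟩, by rw [hx1, hy01]⟩
        have hinj : ((S.filter fun x => x.1 = i).image
            (fun x => ((i, j, y0.2 - x.2) : Fin M × Fin M × ZMod L))).card
            = n i := by
          rw [hn]
          apply Finset.card_image_of_injOn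
          intro y hy z hz h
          have h2 : y0.2 - y.2 = y0.2 - z.2 := (Prod.ext_iff.1 (Prod.ext_iff.1 h).2).2
          have hy2 : y.2 = z.2 := by linear_combination -h2
          exact Prod.ext (((Finset.mem_filter.1 hy).2).trans ((Finset.mem_filter.1 hz).2).symm) hy2
        calc n i = _ := hinj.symm
        _ ≤ _ := Finset.card_le_card himsub
      exact max_le hcardi hcardj
  calc (12 : ℕ) ≤ ∑ q ∈ I ×ˢ I, (if q.1 = q.2 then gg (n q.1) else max (n q.1) (n q.2)) :=
        numeric I n h1 h4
  _ ≤ ∑ q ∈ I ×ˢ I, ∑ p ∈ (Pat S).filter (fun p => (p.1, p.2.1) = q), Wt p :=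
        Finset.sum_le_sum hfiber
  _ = ∑ p ∈ Pat S, Wt p := hsplit

end MC14
namespace MC14
variable {M L : ℕ}

lemma keyA {S T : Finset (Fin M × ZMod L)}
    (hcorr : ∀ τ : ZMod L, (S.filter fun p => (p.1, p.2 + τ) ∈ T).card ≤ 1) :
    Disjoint (Pat S) (Pat T) := by
  rw [Finset.disjoint_left]
  intro p hpS hpT
  rcases Finset.mem_image.1 hpS with ⟨⟨x, y⟩, hq, hpat⟩
  rcases Finset.mem_image.1 hpT with ⟨⟨x', y'⟩, hq', hpat'⟩
  obtain ⟨hxS, hyS, hxy⟩ := Finset.mem_offDiag.1 hq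
  obtain ⟨hx'T, hy'T, hx'y'⟩ := Finset.mem_offDiag.1 hq'
  have e := hpat.trans hpat'.symm
  have e1 : x.1 = x'.1 := (Prod.ext_iff.1 e).1
  have e2 : y.1 = y'.1 := (Prod.ext_iff.1 (Prod.ext_iff.1 e).2).1
  have e3 : y.2 - x.2 = y'.2 - x'.2 := (Prod.ext_iff.1 (Prod.ext_iff.1 e).2).2
  set τ := x'.2 - x.2 with hτ
  have hx : x ∈ S.filter fun p => (p.1, p.2 + τ) ∈ T := by
    refine Finset.mem_filter.2 ⟨hxS, ?_⟩
    have hxx : ((x.1, x.2 + τ) : Fin M × ZMod L) = x' := by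
      refine Prod.ext e1 ?_
      show x.2 + τ = x'.2
      rw [hτ]; ring
    rw [hxx]; exact hx'T
  have hy : y ∈ S.filter fun p => (p.1, p.2 + τ) ∈ T := by
    refine Finset.mem_filter.2 ⟨hyS, ?_⟩
    have hyy : ((y.1, y.2 + τ) : Fin M × ZMod L) = y' := by
      refine Prod.ext e2 ?_
      show y.2 + τ = y'.2
      rw [hτ]; linear_combination e3
    rw [hyy]; exact hy'T
  have hsub : ({x, y} : Finset (Fin M × ZMod L)) ⊆
      S.filter fun p => (p.1, p.2 + τ) ∈ T := by
    intro z hz; simp only [Finset.mem_insert, Finset.mem_singleton] at hz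
    rcases hz with rfl | rfl <;> assumption
  have hc2 : ({x, y} : Finset (Fin M × ZMod L)).card = 2 := by
    rw [Finset.card_insert_of_notMem (by simp [hxy]), Finset.card_singleton]
  have := Finset.card_le_card hsub
  have := hcorr τ
  omega

lemma card_tor [NeZero L] (k : ℕ) (hk : 0 < k) :
    ((Finset.univ : Finset (ZMod L)).filter fun δ => (k : ZMod L) * δ = 0).card
      = Nat.gcd k L := by
  have hL0 : 0 < L := Nat.pos_of_ne_zero (NeZero.ne L)
  set d := Nat.gcd k L with hd
  have hdpos : 0 < d := Nat.gcd_pos_of_pos_left L hk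
  have hdL : d ∣ L := Nat.gcd_dvd_right k L
  have hdk : d ∣ k := Nat.gcd_dvd_left k L
  set L' := L / d with hL'
  have hLeq : d * L' = L := Nat.mul_div_cancel' hdL
  have hL'pos : 0 < L' := by
    rcases Nat.eq_zero_or_pos L' with h | h
    · rw [h, mul_zero] at hLeq; omega
    · exact h
  obtain ⟨k₁, hk₁⟩ := hdk
  have hcop : Nat.Coprime k₁ L' := by
    have := Nat.coprime_div_gcd_div_gcd (m := k) (n := L) hdpos
    have e1 : k / d = k₁ := by rw [hk₁]; exact Nat.mul_div_cancel_left k₁ hdpos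
    have e2 : L / d = L' := rfl
    rwa [e1, e2] at this
  haveI : NeZero d := ⟨by omega⟩
  have hcard : ((Finset.univ : Finset (ZMod L)).filter fun δ => (k : ZMod L) * δ = 0).card
      = (Finset.univ : Finset (ZMod d)).card := by
    apply Finset.card_nbij' (i := fun δ => ((ZMod.val δ / L' : ℕ) : ZMod d))
      (j := fun t => ((ZMod.val t * L' : ℕ) : ZMod L))
    · intro δ _; exact Finset.mem_univ _
    · intro t _
      refine Finset.mem_filter.2 ⟨Finset.mem_univ _, ?_⟩
      have : ((k * (ZMod.val t * L') : ℕ) : ZMod L) = 0 := by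
        rw [ZMod.natCast_eq_zero_iff]
        refine ⟨k₁ * ZMod.val t, ?_⟩
        rw [hk₁]
        calc d * k₁ * (ZMod.val t * L') = (d * L') * (k₁ * ZMod.val t) := by ring
        _ = L * (k₁ * ZMod.val t) := by rw [hLeq]
      push_cast at this
      convert this using 2
      push_cast
      ring
    · intro δ hδ
      have hδ0 : (k : ZMod L) * δ = 0 := (Finset.mem_filter.1 hδ).2
      have hdvd : L' ∣ ZMod.val δ := by
        have h1 : ((k * ZMod.val δ : ℕ) : ZMod L) = 0 := by
          push_cast
          rw [ZMod.natCast_rightInverse δ]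
          exact hδ0
        have h2 : L ∣ k * ZMod.val δ := (ZMod.natCast_eq_zero_iff _ _).1 h1
        obtain ⟨c, hc⟩ := h2
        have h3 : k₁ * ZMod.val δ = L' * c := by
          have : d * (k₁ * ZMod.val δ) = d * (L' * c) := by
            calc d * (k₁ * ZMod.val δ) = (d * k₁) * ZMod.val δ := by ring
            _ = k * ZMod.val δ := by rw [← hk₁]
            _ = L * c := hc
            _ = (d * L') * c := by rw [hLeq]
            _ = d * (L' * c) := by ring
          exact Nat.eq_of_mul_eq_mul_left hdpos this
        exact (Nat.Coprime.dvd_of_dvd_mul_left hcop.symm ⟨c, h3⟩)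
      have hlt : ZMod.val δ / L' < d := by
        apply Nat.div_lt_of_lt_mul
        calc ZMod.val δ < L := ZMod.val_lt δ
        _ = d * L' := hLeq.symm
        _ = L' * d := by ring
      have hvv : (((ZMod.val δ / L' : ℕ) : ZMod d)).val = ZMod.val δ / L' :=
        ZMod.val_cast_of_lt hlt
      dsimp only
      rw [hvv]
      have : ZMod.val δ / L' * L' = ZMod.val δ := Nat.div_mul_cancel hdvd
      rw [this]
      exact ZMod.natCast_rightInverse δ
    · intro t _
      have hlt : ZMod.val t * L' < L := by
        calc ZMod.val t * L' < d * L' := by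
              exact Nat.mul_lt_mul_of_lt_of_le (ZMod.val_lt t) (le_refl L') hL'pos
        _ = L := hLeq
      have hvv : (((ZMod.val t * L' : ℕ) : ZMod L)).val = ZMod.val t * L' :=
        ZMod.val_cast_of_lt hlt
      dsimp only
      rw [hvv]
      have : ZMod.val t * L' / L' = ZMod.val t := Nat.mul_div_cancel _ hL'pos
      rw [this]
      exact ZMod.natCast_rightInverse t
  rw [hcard, Finset.card_univ, ZMod.card]

end MC14
namespace MC14
variable {M L : ℕ}

lemma gcd_prime_eq {p : ℕ} (hp : p.Prime) (L : ℕ) :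
    Nat.gcd p L = if p ∣ L then p else 1 := by
  split_ifs with h
  · exact Nat.gcd_eq_left h
  · rcases (Nat.dvd_prime hp).1 (Nat.gcd_dvd_left p L) with h1 | h1
    · exact h1
    · exfalso
      apply h
      rw [← h1]
      exact Nat.gcd_dvd_right p L

lemma gcd4_eq (L : ℕ) : Nat.gcd 4 L = if 4 ∣ L then 4 else if 2 ∣ L then 2 else 1 := by
  have hg4 := Nat.gcd_dvd_left 4 L
  have hgL := Nat.gcd_dvd_right 4 L
  have h1 : Nat.gcd 4 L ≤ 4 := Nat.le_of_dvd (by norm_num) hg4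
  have h0 : 0 < Nat.gcd 4 L := Nat.gcd_pos_of_pos_left L (by norm_num)
  split_ifs with h4 h2
  · exact Nat.gcd_eq_left h4
  · have h2g : 2 ∣ Nat.gcd 4 L := Nat.dvd_gcd (by norm_num) h2
    interval_cases h : Nat.gcd 4 L
    · omega
    · rfl
    · omega
    · exact absurd hgL h4
  · interval_cases h : Nat.gcd 4 L
    · rfl
    · exact absurd (dvd_trans (by norm_num) hgL) h2
    · omega
    · exact absurd hgL h4

lemma sum_w0_nonzero [NeZero L] :
    ∑ δ ∈ ((Finset.univ : Finset (ZMod L)).filter fun δ => δ ≠ 0), w0 δ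
      = 2 * (L - 1) + (2 * (Nat.gcd 3 L - 1) + (2 * (Nat.gcd 4 L - 1) + (Nat.gcd 5 L - 1))) := by
  classical
  set E := ((Finset.univ : Finset (ZMod L)).filter fun δ => δ ≠ 0) with hE
  have hcardE : E.card = L - 1 := by
    rw [hE, Finset.filter_ne', Finset.card_erase_of_mem (Finset.mem_univ _),
      Finset.card_univ, ZMod.card]
  have hpt : ∀ δ ∈ E, w0 δ = 2 + (2 * (if (3 : ZMod L) * δ = 0 then 1 else 0)
      + (2 * (if (4 : ZMod L) * δ = 0 then 1 else 0)
        + (if (5 : ZMod L) * δ = 0 then 1 else 0))) := by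
    intro δ hδ
    have hδ0 : δ ≠ 0 := (Finset.mem_filter.1 hδ).2
    have hx34 : ¬(3 * δ = 0 ∧ 4 * δ = 0) := by
      rintro ⟨ha, hb⟩; exact hδ0 (by linear_combination hb - ha)
    have hx35 : ¬(3 * δ = 0 ∧ 5 * δ = 0) := by
      rintro ⟨ha, hb⟩; exact hδ0 (by linear_combination 2 * ha - hb)
    have hx45 : ¬(4 * δ = 0 ∧ 5 * δ = 0) := by
      rintro ⟨ha, hb⟩; exact hδ0 (by linear_combination hb - ha)
    by_cases h3 : (3 : ZMod L) * δ = 0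
    · by_cases h4 : (4 : ZMod L) * δ = 0
      · exact absurd ⟨h3, h4⟩ hx34
      · by_cases h5 : (5 : ZMod L) * δ = 0
        · exact absurd ⟨h3, h5⟩ hx35
        · simp [w0, h3, h4, h5]
    · by_cases h4 : (4 : ZMod L) * δ = 0
      · by_cases h5 : (5 : ZMod L) * δ = 0
        · exact absurd ⟨h4, h5⟩ hx45
        · simp [w0, h3, h4, h5]
      · by_cases h5 : (5 : ZMod L) * δ = 0
        · simp [w0, h3, h4, h5]
        · simp [w0, h3, h4, h5]
  rw [Finset.sum_congr rfl hpt]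
  rw [Finset.sum_add_distrib, Finset.sum_add_distrib, Finset.sum_add_distrib]
  rw [← Finset.mul_sum, ← Finset.mul_sum]
  have hcount : ∀ k : ℕ, 0 < k →
      ∑ δ ∈ E, (if ((k : ℕ) : ZMod L) * δ = 0 then 1 else 0) = Nat.gcd k L - 1 := by
    intro k hk
    have hfe : E.filter (fun δ => ((k : ℕ) : ZMod L) * δ = 0)
        = ((Finset.univ : Finset (ZMod L)).filter fun δ => ((k : ℕ) : ZMod L) * δ = 0).erase 0 := by
      ext δ
      simp only [hE, Finset.mem_filter, Finset.mem_erase, Finset.mem_univ, true_and]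
    have h0mem : (0 : ZMod L) ∈ ((Finset.univ : Finset (ZMod L)).filter
        fun δ => ((k : ℕ) : ZMod L) * δ = 0) :=
      Finset.mem_filter.2 ⟨Finset.mem_univ _, by rw [mul_zero]⟩
    calc ∑ δ ∈ E, (if ((k : ℕ) : ZMod L) * δ = 0 then 1 else 0)
        = (E.filter (fun δ => ((k : ℕ) : ZMod L) * δ = 0)).card := by
          simp [Finset.sum_boole]
    _ = Nat.gcd k L - 1 := by
          rw [hfe, Finset.card_erase_of_mem h0mem, card_tor k hk]
  have e3 : ((3 : ℕ) : ZMod L) = (3 : ZMod L) := by norm_cast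
  have e4 : ((4 : ℕ) : ZMod L) = (4 : ZMod L) := by norm_cast
  have e5 : ((5 : ℕ) : ZMod L) = (5 : ZMod L) := by norm_cast
  have h3c := hcount 3 (by norm_num); rw [e3] at h3c
  have h4c := hcount 4 (by norm_num); rw [e4] at h4c
  have h5c := hcount 5 (by norm_num); rw [e5] at h5c
  rw [h3c, h4c, h5c, Finset.sum_const, smul_eq_mul, hcardE]
  ring

end MC14
namespace MC14
variable {M L : ℕ}

lemma total [NeZero L] :
    ∑ p ∈ ((Finset.univ : Finset (Fin M × Fin M × ZMod L)).filter
        fun p => ¬(p.1 = p.2.1 ∧ p.2.2 = 0)), Wt p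
      = (M * M - M) * L
        + M * ∑ δ ∈ ((Finset.univ : Finset (ZMod L)).filter fun δ => δ ≠ 0), w0 δ := by
  classical
  set P0 := ((Finset.univ : Finset (Fin M × Fin M × ZMod L)).filter
    fun p => ¬(p.1 = p.2.1 ∧ p.2.2 = 0)) with hP0
  set E := ((Finset.univ : Finset (ZMod L)).filter fun δ => δ ≠ 0) with hE
  have hsplit := Finset.sum_filter_add_sum_filter_not P0 (fun p => p.1 = p.2.1) Wt
  have hdiag : ∑ p ∈ P0.filter (fun p => p.1 = p.2.1), Wt p
      = M * ∑ δ ∈ E, w0 δ := by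
    have hbij : ∑ p ∈ P0.filter (fun p => p.1 = p.2.1), Wt p
        = ∑ q ∈ (Finset.univ : Finset (Fin M)) ×ˢ E, w0 q.2 := by
      apply Finset.sum_nbij' (i := fun p : Fin M × Fin M × ZMod L => (p.1, p.2.2))
        (j := fun q : Fin M × ZMod L => (q.1, q.1, q.2))
      · intro p hp
        have h1 := (Finset.mem_filter.1 hp).2
        have h0 := (Finset.mem_filter.1 (Finset.mem_filter.1 hp).1).2
        refine Finset.mem_product.2 ⟨Finset.mem_univ _, ?_⟩
        refine Finset.mem_filter.2 ⟨Finset.mem_univ _, ?_⟩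
        intro hz
        exact h0 ⟨h1, hz⟩
      · intro q hq
        have h2 := (Finset.mem_filter.1 (Finset.mem_product.1 hq).2).2
        refine Finset.mem_filter.2 ⟨?_, rfl⟩
        refine Finset.mem_filter.2 ⟨Finset.mem_univ _, ?_⟩
        rintro ⟨-, hz⟩
        exact h2 hz
      · intro p hp
        have h1 := (Finset.mem_filter.1 hp).2
        exact Prod.ext rfl (Prod.ext h1 rfl)
      · intro q _; rfl
      · intro p hp
        have h1 := (Finset.mem_filter.1 hp).2
        unfold Wt
        rw [if_pos h1]
    rw [hbij, Finset.sum_product]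
    calc ∑ x : Fin M, ∑ y ∈ E, w0 ((x, y) : Fin M × ZMod L).2
        = ∑ _x : Fin M, ∑ δ ∈ E, w0 δ := rfl
    _ = M * ∑ δ ∈ E, w0 δ := by
        rw [Finset.sum_const, Finset.card_univ, Fintype.card_fin, smul_eq_mul]
  have hcross : ∑ p ∈ P0.filter (fun p => ¬p.1 = p.2.1), Wt p = (M * M - M) * L := by
    have hwt1 : ∀ p ∈ P0.filter (fun p => ¬p.1 = p.2.1), Wt p = 1 := by
      intro p hp
      unfold Wt
      rw [if_neg (Finset.mem_filter.1 hp).2]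
    rw [Finset.sum_congr rfl hwt1, Finset.sum_const, smul_eq_mul, mul_one]
    have hcardeq : (P0.filter (fun p => ¬p.1 = p.2.1)).card
        = (((Finset.univ : Finset (Fin M × Fin M)).filter fun q => ¬q.1 = q.2)
            ×ˢ (Finset.univ : Finset (ZMod L))).card := by
      apply Finset.card_nbij' (i := fun p : Fin M × Fin M × ZMod L => ((p.1, p.2.1), p.2.2))
        (j := fun q : (Fin M × Fin M) × ZMod L => (q.1.1, q.1.2, q.2))
      · intro p hp
        have h1 := (Finset.mem_filter.1 hp).2
        exact Finset.mem_product.2 ⟨Finset.mem_filter.2 ⟨Finset.mem_univ _, h1⟩,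
          Finset.mem_univ _⟩
      · intro q hq
        have h1 := (Finset.mem_filter.1 (Finset.mem_product.1 hq).1).2
        refine Finset.mem_filter.2 ⟨?_, h1⟩
        refine Finset.mem_filter.2 ⟨Finset.mem_univ _, ?_⟩
        rintro ⟨hz, -⟩
        exact h1 hz
      · intro p _
        exact Prod.ext rfl (Prod.ext rfl rfl)
      · intro q _
        exact Prod.ext (Prod.ext rfl rfl) rfl
    rw [hcardeq, Finset.card_product, Finset.card_univ, ZMod.card]
    congr 1
    have hdiagcard : (((Finset.univ : Finset (Fin M × Fin M)).filter fun q => q.1 = q.2)).card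
        = M := by
      have : (((Finset.univ : Finset (Fin M × Fin M)).filter fun q => q.1 = q.2)).card
          = (Finset.univ : Finset (Fin M)).card := by
        apply Finset.card_nbij' (i := fun q : Fin M × Fin M => q.1) (j := fun i => (i, i))
        · intro q _; exact Finset.mem_univ _
        · intro i _
          exact Finset.mem_filter.2 ⟨Finset.mem_univ _, rfl⟩
        · intro q hq
          exact Prod.ext rfl (Finset.mem_filter.1 hq).2
        · intro i _; rfl
      rw [this, Finset.card_univ, Fintype.card_fin]
    have hadd := Finset.card_filter_add_card_filter_not
      (s := (Finset.univ : Finset (Fin M × Fin M))) (p := fun q => q.1 = q.2)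
    have huniv : (Finset.univ : Finset (Fin M × Fin M)).card = M * M := by
      rw [Finset.card_univ, Fintype.card_prod, Fintype.card_fin]
    omega
  omega

lemma arith (M L J : ℕ) (hM : 1 ≤ M) (hL : 2 ≤ L) :
    (M * M - M) * L + M * (2 * (L - 1) + 2 * J) = M * (M * L + L - 2 + 2 * J) := by
  have h1 : 1 ≤ L := by omega
  have h2 : 2 ≤ M * L + L := by
    have := Nat.le_mul_of_pos_right M (show 0 < L by omega)
    omega
  have h3 : M ≤ M * M := Nat.le_mul_of_pos_left M (by omega)
  zify [h1, h2, h3]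
  ring

lemma bonus_eq (L : ℕ) :
    2 * (Nat.gcd 3 L - 1) + (2 * (Nat.gcd 4 L - 1) + (Nat.gcd 5 L - 1))
      = 2 * ((if 2 ∣ L then 1 else 0) + 2 * (if 3 ∣ L then 1 else 0)
          + 2 * (if 4 ∣ L then 1 else 0) + 2 * (if 5 ∣ L then 1 else 0)) := by
  rw [gcd_prime_eq (by norm_num : Nat.Prime 3) L,
    gcd_prime_eq (by norm_num : Nat.Prime 5) L, gcd4_eq L]
  by_cases h4 : 4 ∣ L
  · have h2 : 2 ∣ L := dvd_trans (by norm_num) h4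
    by_cases h3 : 3 ∣ L <;> by_cases h5 : 5 ∣ L <;> simp [h2, h3, h4, h5]
  · by_cases h2 : 2 ∣ L <;> by_cases h3 : 3 ∣ L <;> by_cases h5 : 5 ∣ L <;>
      simp [h2, h3, h4, h5]

end MC14
/-- A multichannel conflict-avoiding code MC-CAC(M, L, w): a set of scheduling
patterns (supports of `M × L` zero-one arrays) of weight `w` such that every
cyclic-shift cross-correlation between two distinct codewords is at most 1. -/
def IsMCCAC (M L w : ℕ) (C : Finset (Finset (Fin M × ZMod L))) : Prop :=
  (∀ S ∈ C, S.card = w) ∧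
  (∀ S ∈ C, ∀ T ∈ C, S ≠ T → ∀ τ : ZMod L,
    (S.filter fun p => (p.1, p.2 + τ) ∈ T).card ≤ 1)

theorem stmt14 (M L : ℕ) (hM : 4 ≤ M) (hL : 2 ≤ L)
    (C : Finset (Finset (Fin M × ZMod L))) (hC : IsMCCAC M L 4 C) :
    C.card ≤ M * (M * L + L - 2 +
      2 * ((if 2 ∣ L then 1 else 0) + 2 * (if 3 ∣ L then 1 else 0)
        + 2 * (if 4 ∣ L then 1 else 0) + 2 * (if 5 ∣ L then 1 else 0))) / 12 := by
  classical
  haveI : NeZero L := ⟨by omega⟩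
  obtain ⟨hw, hcorr⟩ := hC
  have hsub : ∀ S ∈ C, MC14.Pat S ⊆ ((Finset.univ : Finset (Fin M × Fin M × ZMod L)).filter
      fun p => ¬(p.1 = p.2.1 ∧ p.2.2 = 0)) := by
    intro S hS p hp
    rcases Finset.mem_image.1 hp with ⟨⟨x, y⟩, hq, rfl⟩
    obtain ⟨hx, hy, hxy⟩ := Finset.mem_offDiag.1 hq
    refine Finset.mem_filter.2 ⟨Finset.mem_univ _, ?_⟩
    rintro ⟨h1, h2⟩
    apply hxy
    refine Prod.ext h1 ?_
    show x.2 = y.2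
    linear_combination -h2
  have hdisjoint : (↑C : Set (Finset (Fin M × ZMod L))).PairwiseDisjoint MC14.Pat := by
    intro S hS T hT hne
    exact MC14.keyA (hcorr S (Finset.mem_coe.1 hS) T (Finset.mem_coe.1 hT) hne)
  have hkey : 12 * C.card ≤ ∑ p ∈ ((Finset.univ : Finset (Fin M × Fin M × ZMod L)).filter
      fun p => ¬(p.1 = p.2.1 ∧ p.2.2 = 0)), MC14.Wt p := by
    calc 12 * C.card = ∑ _S ∈ C, 12 := by
          rw [Finset.sum_const, smul_eq_mul, mul_comm]
    _ ≤ ∑ S ∈ C, ∑ p ∈ MC14.Pat S, MC14.Wt p :=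
          Finset.sum_le_sum fun S hS => MC14.keyB (hw S hS)
    _ = ∑ p ∈ C.biUnion MC14.Pat, MC14.Wt p := (Finset.sum_biUnion hdisjoint).symm
    _ ≤ _ := Finset.sum_le_sum_of_subset (Finset.biUnion_subset.2 hsub)
  rw [MC14.total, MC14.sum_w0_nonzero, MC14.bonus_eq,
    MC14.arith M L _ (by omega) hL] at hkey
  rw [Nat.le_div_iff_mul_le (by norm_num : 0 < 12)]
  omega
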